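/- arXiv:2302.14446 — 2 statements merged into one kernel-verified Lean document; each statement's English description precedes it below -/
import Mathlib

section
/- Mean field limit of bounded RKHS sequences: if f_M ∈ H_M with ‖f_M‖_{H_M} ≤ B for all M, where the kernels k^{[M]} satisfy permutation-invariance, uniform boundedness and uniform continuity w.r.t. empirical measures, then there exists a subsequence (f_{M_ℓ}) and a continuous function f : 𝒫(X) → ℝ such that sup_{x ∈ X^{M_ℓ}} |f_{M_ℓ}(x) − f(μ̂[x])| → 0 as ℓ → ∞. -/
open MeasureTheory ENNReal

/-- Kantorovich–Rubinstein (Wasserstein-1 dual) distance between two measures. -/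
noncomputable def dKR {X : Type*} [MeasurableSpace X] [MetricSpace X]
    (μ ν : Measure X) : ℝ :=
  sSup {r : ℝ | ∃ φ : X → ℝ, LipschitzWith 1 φ ∧
    r = ∫ x, φ x ∂μ - ∫ x, φ x ∂ν}

/-- Empirical measure of a tuple. -/
noncomputable def emp {X : Type*} [MeasurableSpace X] {M : ℕ} (x : Fin M → X) :
    Measure X :=
  ((M : ℝ≥0∞))⁻¹ • ∑ i, Measure.dirac (x i)

/-- Empirical measure as a probability measure. -/
noncomputable def empP {X : Type*} [MeasurableSpace X] {M : ℕ} (x : Fin (M + 1) → X) :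
    ProbabilityMeasure X :=
  ⟨emp x, by
    constructor
    simp only [emp, Measure.smul_apply, Measure.finset_sum_apply,
      Measure.dirac_apply' _ MeasurableSet.univ, Set.indicator_univ, smul_eq_mul]
    simp only [Pi.one_apply, Finset.sum_const, Finset.card_univ, Fintype.card_fin,
      nsmul_eq_mul, mul_one]
    rw [ENNReal.inv_mul_cancel] <;> simp⟩

set_option linter.unusedSectionVars false
set_option linter.unusedVariables false
set_option maxHeartbeats 1000000

section Infrastructure

variable {X : Type*} [MetricSpace X] [CompactSpace X] [MeasurableSpace X] [BorelSpace X]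


variable {X : Type*} [MetricSpace X] [CompactSpace X] [MeasurableSpace X] [BorelSpace X]

theorem lip_integrable (φ : X → ℝ) (hφ : LipschitzWith 1 φ) (μ : Measure X)
    [IsFiniteMeasure μ] : Integrable φ μ :=
  hφ.continuous.integrable_of_hasCompactSupport
    (IsCompact.of_isClosed_subset isCompact_univ (isClosed_tsupport φ) (Set.subset_univ _))

theorem dKR_mem_le {x₀ : X} {R : ℝ} (hR : ∀ z : X, dist z x₀ ≤ R)
    (μ ν : Measure X) [IsProbabilityMeasure μ] [IsProbabilityMeasure ν]
    {r : ℝ} (hr : r ∈ {r : ℝ | ∃ φ : X → ℝ, LipschitzWith 1 φ ∧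
      r = ∫ x, φ x ∂μ - ∫ x, φ x ∂ν}) : r ≤ 2 * R := by
  obtain ⟨φ, hφ, rfl⟩ := hr
  have hint : ∀ (σ : Measure X) [IsProbabilityMeasure σ],
      ∫ x, φ x ∂σ - φ x₀ = ∫ x, (φ x - φ x₀) ∂σ := by
    intro σ hσ
    rw [integral_sub (lip_integrable φ hφ σ) (integrable_const _), integral_const]
    simp
  have key : ∀ (σ : Measure X) [IsProbabilityMeasure σ],
      |∫ x, φ x ∂σ - φ x₀| ≤ R := by
    intro σ hσ
    rw [hint σ]
    calc |∫ x, (φ x - φ x₀) ∂σ| ≤ ∫ x, |φ x - φ x₀| ∂σ :=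
          by simpa [Real.norm_eq_abs] using norm_integral_le_integral_norm (μ := σ) (fun x => φ x - φ x₀)
      _ ≤ ∫ x, R ∂σ := by
          apply integral_mono ((lip_integrable φ hφ σ).sub (integrable_const _)).abs
            (integrable_const _)
          intro z
          calc |φ z - φ x₀| ≤ dist z x₀ := by
                have := hφ.dist_le_mul z x₀
                simpa [Real.dist_eq] using this
            _ ≤ R := hR z
      _ = R := by simp
  have h1 := key μ
  have h2 := key ν
  have := abs_sub_abs_le_abs_sub (∫ x, φ x ∂μ - φ x₀) (∫ x, φ x ∂ν - φ x₀)
  nlinarith [abs_nonneg (∫ x, φ x ∂μ - φ x₀), neg_abs_le (∫ x, φ x ∂μ - φ x₀),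
    le_abs_self (∫ x, φ x ∂μ - φ x₀), neg_abs_le (∫ x, φ x ∂ν - φ x₀),
    le_abs_self (∫ x, φ x ∂ν - φ x₀)]

theorem dKR_set_nonempty (μ ν : Measure X) :
    Set.Nonempty {r : ℝ | ∃ φ : X → ℝ, LipschitzWith 1 φ ∧
      r = ∫ x, φ x ∂μ - ∫ x, φ x ∂ν} :=
  ⟨0, fun _ => 0, LipschitzWith.const' 0, by simp⟩

theorem dKR_bddAbove {x₀ : X} {R : ℝ} (hR : ∀ z : X, dist z x₀ ≤ R)
    (μ ν : Measure X) [IsProbabilityMeasure μ] [IsProbabilityMeasure ν] :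
    BddAbove {r : ℝ | ∃ φ : X → ℝ, LipschitzWith 1 φ ∧
      r = ∫ x, φ x ∂μ - ∫ x, φ x ∂ν} :=
  ⟨2 * R, fun r hr => dKR_mem_le hR μ ν hr⟩

theorem le_dKR {x₀ : X} {R : ℝ} (hR : ∀ z : X, dist z x₀ ≤ R)
    (μ ν : Measure X) [IsProbabilityMeasure μ] [IsProbabilityMeasure ν]
    (φ : X → ℝ) (hφ : LipschitzWith 1 φ) :
    ∫ x, φ x ∂μ - ∫ x, φ x ∂ν ≤ dKR μ ν :=
  le_csSup (dKR_bddAbove hR μ ν) ⟨φ, hφ, rfl⟩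

theorem dKR_le (μ ν : Measure X) {c : ℝ}
    (h : ∀ φ : X → ℝ, LipschitzWith 1 φ → ∫ x, φ x ∂μ - ∫ x, φ x ∂ν ≤ c) :
    dKR μ ν ≤ c := by
  apply Real.sSup_le _ (by simpa using h (fun _ => 0) (LipschitzWith.const' 0))
  rintro r ⟨φ, hφ, rfl⟩
  exact h φ hφ

theorem dKR_nonneg {x₀ : X} {R : ℝ} (hR : ∀ z : X, dist z x₀ ≤ R)
    (μ ν : Measure X) [IsProbabilityMeasure μ] [IsProbabilityMeasure ν] :
    0 ≤ dKR μ ν := by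
  simpa using le_dKR hR μ ν (fun _ => 0) (LipschitzWith.const' 0)

theorem dKR_self (μ : Measure X) : dKR μ μ = 0 := by
  have : {r : ℝ | ∃ φ : X → ℝ, LipschitzWith 1 φ ∧
      r = ∫ x, φ x ∂μ - ∫ x, φ x ∂μ} = {0} := by
    ext r
    simp only [Set.mem_setOf_eq, Set.mem_singleton_iff]
    constructor
    · rintro ⟨φ, hφ, rfl⟩; ring
    · rintro rfl; exact ⟨fun _ => 0, LipschitzWith.const' 0, by simp⟩
  rw [dKR, this, csSup_singleton]

theorem dKR_symm (μ ν : Measure X) : dKR μ ν = dKR ν μ := by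
  have key : ∀ σ τ : Measure X, {r : ℝ | ∃ φ : X → ℝ, LipschitzWith 1 φ ∧
      r = ∫ x, φ x ∂σ - ∫ x, φ x ∂τ} ⊆ {r : ℝ | ∃ φ : X → ℝ, LipschitzWith 1 φ ∧
      r = ∫ x, φ x ∂τ - ∫ x, φ x ∂σ} := by
    rintro σ τ r ⟨φ, hφ, rfl⟩
    refine ⟨fun z => -φ z, hφ.neg, ?_⟩
    simp [integral_neg]
    ring
  have : ∀ σ τ : Measure X, {r : ℝ | ∃ φ : X → ℝ, LipschitzWith 1 φ ∧
      r = ∫ x, φ x ∂σ - ∫ x, φ x ∂τ} = {r : ℝ | ∃ φ : X → ℝ, LipschitzWith 1 φ ∧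
      r = ∫ x, φ x ∂τ - ∫ x, φ x ∂σ} :=
    fun σ τ => Set.Subset.antisymm (key σ τ) (key τ σ)
  rw [dKR, dKR, this]

theorem dKR_triangle {x₀ : X} {R : ℝ} (hR : ∀ z : X, dist z x₀ ≤ R)
    (μ ν σ : Measure X) [IsProbabilityMeasure μ] [IsProbabilityMeasure ν]
    [IsProbabilityMeasure σ] : dKR μ ν ≤ dKR μ σ + dKR σ ν := by
  apply dKR_le
  intro φ hφ
  have h1 := le_dKR hR μ σ φ hφ
  have h2 := le_dKR hR σ ν φ hφ
  linarith



variable {X : Type*} [MetricSpace X] [CompactSpace X] [MeasurableSpace X] [BorelSpace X]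

theorem cont_integrable (φ : X → ℝ) (hφ : Continuous φ) (μ : Measure X)
    [IsFiniteMeasure μ] : Integrable φ μ :=
  hφ.integrable_of_hasCompactSupport
    (IsCompact.of_isClosed_subset isCompact_univ (isClosed_tsupport φ) (Set.subset_univ _))

theorem exists_net [Nonempty X] {ε : ℝ} (hε : 0 < ε) :
    ∃ (n : ℕ) (y : Fin n → X), 0 < n ∧ ∀ z : X, ∃ i, dist z (y i) < ε := by
  obtain ⟨t, -, tfin, hcover⟩ := finite_cover_balls_of_compact (isCompact_univ : IsCompact (Set.univ : Set X)) hε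
  haveI := tfin.fintype
  refine ⟨Fintype.card ↥t, fun i => ((Fintype.equivFin ↥t).symm i : X), ?_, ?_⟩
  · have hz := hcover (Set.mem_univ (Classical.arbitrary X))
    simp only [Set.mem_iUnion] at hz
    obtain ⟨x, hx, -⟩ := hz
    exact Fintype.card_pos_iff.2 ⟨⟨x, hx⟩⟩
  · intro z
    have hz := hcover (Set.mem_univ z)
    simp only [Set.mem_iUnion] at hz
    obtain ⟨x, hx, hball⟩ := hz
    refine ⟨Fintype.equivFin ↥t ⟨x, hx⟩, ?_⟩
    simpa [Metric.mem_ball, dist_comm] using hball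

variable {n : ℕ}

/-- bump functions -/
noncomputable def psi (ε : ℝ) (y : Fin n → X) (i : Fin n) (z : X) : ℝ :=
  max (ε - dist z (y i)) 0

/-- partition of unity -/
noncomputable def chi (ε : ℝ) (y : Fin n → X) (i : Fin n) (z : X) : ℝ :=
  psi ε y i z / ∑ j, psi ε y j z

theorem psi_nonneg (ε : ℝ) (y : Fin n → X) (i : Fin n) (z : X) : 0 ≤ psi ε y i z :=
  le_max_right _ _

theorem psi_cont (ε : ℝ) (y : Fin n → X) (i : Fin n) : Continuous (psi ε y i) :=
  ((continuous_const.sub (continuous_id.dist continuous_const)).max continuous_const)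

theorem sum_psi_pos {ε : ℝ} {y : Fin n → X} (hnet : ∀ z : X, ∃ i, dist z (y i) < ε) (z : X) :
    0 < ∑ j, psi ε y j z := by
  obtain ⟨i, hi⟩ := hnet z
  apply Finset.sum_pos' (fun j _ => psi_nonneg ε y j z) ⟨i, Finset.mem_univ i, ?_⟩
  simp only [psi, lt_max_iff]
  left; linarith

theorem chi_nonneg {ε : ℝ} {y : Fin n → X} (hnet : ∀ z : X, ∃ i, dist z (y i) < ε)
    (i : Fin n) (z : X) : 0 ≤ chi ε y i z :=
  div_nonneg (psi_nonneg ε y i z) (le_of_lt (sum_psi_pos hnet z))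

theorem sum_chi {ε : ℝ} {y : Fin n → X} (hnet : ∀ z : X, ∃ i, dist z (y i) < ε) (z : X) :
    ∑ i, chi ε y i z = 1 := by
  simp only [chi]
  rw [← Finset.sum_div]
  exact div_self (ne_of_gt (sum_psi_pos hnet z))

theorem chi_cont {ε : ℝ} {y : Fin n → X} (hnet : ∀ z : X, ∃ i, dist z (y i) < ε) (i : Fin n) :
    Continuous (chi ε y i) :=
  (psi_cont ε y i).div (continuous_finset_sum _ (fun j _ => psi_cont ε y j))
    (fun z => ne_of_gt (sum_psi_pos hnet z))

theorem chi_support {ε : ℝ} {y : Fin n → X} {i : Fin n} {z : X} (h : chi ε y i z ≠ 0) :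
    dist z (y i) < ε := by
  have hψ : psi ε y i z ≠ 0 := fun h0 => h (by simp [chi, h0])
  simp only [psi] at hψ
  rcases lt_or_ge (dist z (y i)) ε with h' | h'
  · exact h'
  · exact absurd (max_eq_right (by linarith)) hψ

/-- discrete measure with given weights -/
noncomputable def mkM (y : Fin n → X) (a : Fin n → ℝ) : Measure X :=
  ∑ i, ENNReal.ofReal (a i) • Measure.dirac (y i)

theorem mkM_finite (y : Fin n → X) (a : Fin n → ℝ) : IsFiniteMeasure (mkM y a) := by
  constructor
  simp only [mkM, Measure.finset_sum_apply, Measure.smul_apply, smul_eq_mul]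
  exact ENNReal.sum_lt_top.2 fun i _ => ENNReal.mul_lt_top ofReal_lt_top
    (lt_of_le_of_lt prob_le_one one_lt_top)

theorem mkM_prob (y : Fin n → X) (a : Fin n → ℝ) (ha : ∀ i, 0 ≤ a i) (hsum : ∑ i, a i = 1) :
    IsProbabilityMeasure (mkM y a) := by
  constructor
  simp only [mkM, Measure.finset_sum_apply, Measure.smul_apply, smul_eq_mul,
    Measure.dirac_apply' _ MeasurableSet.univ, Set.indicator_univ, Pi.one_apply, mul_one]
  rw [← ENNReal.ofReal_sum_of_nonneg (fun i _ => ha i), hsum, ofReal_one]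

theorem integral_mkM (y : Fin n → X) (a : Fin n → ℝ) (ha : ∀ i, 0 ≤ a i)
    (φ : X → ℝ) (hφ : Continuous φ) :
    ∫ z, φ z ∂(mkM y a) = ∑ i, a i * φ (y i) := by
  rw [mkM, integral_finset_sum_measure ?_]
  · refine Finset.sum_congr rfl (fun i _ => ?_)
    rw [integral_smul_measure, integral_dirac, toReal_ofReal (ha i), smul_eq_mul]
  · intro i _
    haveI : IsFiniteMeasure (ENNReal.ofReal (a i) • Measure.dirac (y i) : Measure X) := by
      constructor
      simp [Measure.smul_apply, lt_top_iff_ne_top, ofReal_ne_top]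
    exact cont_integrable φ hφ _

theorem dKR_mu_mkM {ε : ℝ} {y : Fin n → X} (hnet : ∀ z : X, ∃ i, dist z (y i) < ε)
    (μ : Measure X) [IsProbabilityMeasure μ] :
    dKR μ (mkM y (fun i => ∫ z, chi ε y i z ∂μ)) ≤ ε := by
  set a : Fin n → ℝ := fun i => ∫ z, chi ε y i z ∂μ with ha_def
  have ha : ∀ i, 0 ≤ a i := fun i => integral_nonneg (fun z => chi_nonneg hnet i z)
  apply dKR_le
  intro φ hφ
  have hφc := hφ.continuous
  have hint1 : ∫ z, φ z ∂μ = ∑ i, ∫ z, chi ε y i z * φ z ∂μ := by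
    rw [← integral_finset_sum _ (fun i _ => cont_integrable (fun z => chi ε y i z * φ z) ((chi_cont hnet i).mul hφc) μ)]
    congr 1
    funext z
    rw [← Finset.sum_mul, sum_chi hnet z, one_mul]
  have hint2 : ∫ z, φ z ∂(mkM y a) = ∑ i, ∫ z, chi ε y i z * φ (y i) ∂μ := by
    rw [integral_mkM y a ha φ hφc]
    refine Finset.sum_congr rfl (fun i _ => ?_)
    rw [integral_mul_const]
  rw [hint1, hint2, ← Finset.sum_sub_distrib]
  have step : ∀ i : Fin n, ∫ z, chi ε y i z * φ z ∂μ - ∫ z, chi ε y i z * φ (y i) ∂μ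
      ≤ ∫ z, chi ε y i z * ε ∂μ := by
    intro i
    rw [← integral_sub (cont_integrable (fun z => chi ε y i z * φ z) ((chi_cont hnet i).mul hφc) μ)
      (cont_integrable (fun z => chi ε y i z * φ (y i)) ((chi_cont hnet i).mul continuous_const) μ)]
    apply integral_mono (Integrable.sub (cont_integrable _ ((chi_cont hnet i).mul hφc) μ)
      (cont_integrable _ ((chi_cont hnet i).mul continuous_const) μ))
      (cont_integrable _ ((chi_cont hnet i).mul continuous_const) μ)
    intro z
    simp only [Pi.sub_apply, Pi.mul_apply, ← mul_sub]
    rcases eq_or_lt_of_le (chi_nonneg hnet i z) with h0 | hpos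
    · simp [← h0]
    · apply mul_le_mul_of_nonneg_left _ (le_of_lt hpos)
      have hd := chi_support (ne_of_gt hpos)
      have := hφ.dist_le_mul z (y i)
      rw [Real.dist_eq] at this
      calc φ z - φ (y i) ≤ |φ z - φ (y i)| := le_abs_self _
        _ ≤ dist z (y i) := by simpa using this
        _ ≤ ε := le_of_lt hd
  calc ∑ i, (∫ z, chi ε y i z * φ z ∂μ - ∫ z, chi ε y i z * φ (y i) ∂μ)
      ≤ ∑ i, ∫ z, chi ε y i z * ε ∂μ := Finset.sum_le_sum (fun i _ => step i)
    _ = ∫ z, (∑ i, chi ε y i z) * ε ∂μ := by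
        rw [← integral_finset_sum _ (fun i _ => cont_integrable (fun z => chi ε y i z * ε)
          ((chi_cont hnet i).mul continuous_const) μ)]
        congr 1; funext z; rw [Finset.sum_mul]
    _ = ε := by
        have : ∀ z : X, (∑ i, chi ε y i z) * ε = ε := fun z => by rw [sum_chi hnet z, one_mul]
        simp only [this]
        simp

theorem dKR_mkM_mkM {x₀ : X} {R : ℝ} (hR : ∀ z : X, dist z x₀ ≤ R)
    (y : Fin n → X) (a b : Fin n → ℝ) (ha : ∀ i, 0 ≤ a i) (hb : ∀ i, 0 ≤ b i)
    (hsa : ∑ i, a i = 1) (hsb : ∑ i, b i = 1) :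
    dKR (mkM y a) (mkM y b) ≤ R * ∑ i, |a i - b i| := by
  apply dKR_le
  intro φ hφ
  rw [integral_mkM y a ha φ hφ.continuous, integral_mkM y b hb φ hφ.continuous]
  have key : ∑ i, a i * φ (y i) - ∑ i, b i * φ (y i)
      = ∑ i, (a i - b i) * (φ (y i) - φ x₀) := by
    rw [← Finset.sum_sub_distrib]
    have : ∀ i : Fin n, a i * φ (y i) - b i * φ (y i) = (a i - b i) * (φ (y i) - φ x₀)
        + (a i - b i) * φ x₀ := fun i => by ring
    simp only [this, Finset.sum_add_distrib, ← Finset.sum_mul, Finset.sum_sub_distrib,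
      hsa, hsb]
    ring
  rw [key]
  calc ∑ i, (a i - b i) * (φ (y i) - φ x₀)
      ≤ ∑ i, |a i - b i| * R := by
        apply Finset.sum_le_sum
        intro i _
        calc (a i - b i) * (φ (y i) - φ x₀) ≤ |(a i - b i) * (φ (y i) - φ x₀)| := le_abs_self _
          _ = |a i - b i| * |φ (y i) - φ x₀| := abs_mul _ _
          _ ≤ |a i - b i| * R := by
              apply mul_le_mul_of_nonneg_left _ (abs_nonneg _)
              have := hφ.dist_le_mul (y i) x₀
              rw [Real.dist_eq] at this
              calc |φ (y i) - φ x₀| ≤ dist (y i) x₀ := by simpa using this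
                _ ≤ R := hR (y i)
    _ = R * ∑ i, |a i - b i| := by rw [← Finset.sum_mul]; ring



theorem integral_chi_nonneg {ε : ℝ} {y : Fin n → X} (hnet : ∀ z : X, ∃ i, dist z (y i) < ε)
    (μ : Measure X) [IsProbabilityMeasure μ] (i : Fin n) :
    0 ≤ ∫ z, chi ε y i z ∂μ :=
  integral_nonneg (fun z => chi_nonneg hnet i z)

theorem sum_integral_chi {ε : ℝ} {y : Fin n → X} (hnet : ∀ z : X, ∃ i, dist z (y i) < ε)
    (μ : Measure X) [IsProbabilityMeasure μ] :
    ∑ i, ∫ z, chi ε y i z ∂μ = 1 := by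
  rw [← integral_finset_sum _ (fun i _ => cont_integrable _ (chi_cont hnet i) μ)]
  have : ∀ z : X, ∑ i, chi ε y i z = 1 := sum_chi hnet
  simp only [this]
  simp

theorem continuous_integral_chi {ε : ℝ} {y : Fin n → X}
    (hnet : ∀ z : X, ∃ i, dist z (y i) < ε) (i : Fin n) :
    Continuous (fun ν : ProbabilityMeasure X => ∫ z, chi ε y i z ∂(ν : Measure X)) := by
  have := ProbabilityMeasure.continuous_integral_boundedContinuousFunction
    (X := X) (BoundedContinuousFunction.mkOfCompact ⟨chi ε y i, chi_cont hnet i⟩)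
  simpa using this

theorem weak_nbhd_dKR [Nonempty X] {x₀ : X} {R : ℝ} (hR : ∀ z : X, dist z x₀ ≤ R)
    (μ₀ : ProbabilityMeasure X) {δ : ℝ} (hδ : 0 < δ) :
    ∀ᶠ ν : ProbabilityMeasure X in nhds μ₀, dKR (ν : Measure X) (μ₀ : Measure X) ≤ δ := by
  have hR0 : 0 ≤ R := le_trans dist_nonneg (hR x₀)
  obtain ⟨n, y, hn, hnet⟩ := exists_net (X := X) (ε := δ/4) (by linarith)
  set σ : ℝ := δ / (2 * (R + 1) * n) with hσ_def
  have hσ : 0 < σ := by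
    apply div_pos hδ
    positivity
  have hev : ∀ᶠ ν : ProbabilityMeasure X in nhds μ₀, ∀ i : Fin n,
      |(∫ z, chi (δ/4) y i z ∂(ν : Measure X)) - ∫ z, chi (δ/4) y i z ∂(μ₀ : Measure X)| < σ := by
    rw [Filter.eventually_all]
    intro i
    have hc := (continuous_integral_chi hnet i).tendsto μ₀
    have := Metric.tendsto_nhds.mp hc σ hσ
    simpa [Real.dist_eq] using this
  filter_upwards [hev] with ν hν
  set a : Fin n → ℝ := fun i => ∫ z, chi (δ/4) y i z ∂(ν : Measure X) with ha_def
  set b : Fin n → ℝ := fun i => ∫ z, chi (δ/4) y i z ∂(μ₀ : Measure X) with hb_def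
  have haP : ∀ i, 0 ≤ a i := integral_chi_nonneg hnet _
  have hbP : ∀ i, 0 ≤ b i := integral_chi_nonneg hnet _
  have hsa : ∑ i, a i = 1 := sum_integral_chi hnet _
  have hsb : ∑ i, b i = 1 := sum_integral_chi hnet _
  haveI := mkM_prob y a haP hsa
  haveI := mkM_prob y b hbP hsb
  have t1 : dKR (ν : Measure X) (mkM y a) ≤ δ/4 := dKR_mu_mkM hnet _
  have t3 : dKR (mkM y b) (μ₀ : Measure X) ≤ δ/4 := by
    rw [dKR_symm]; exact dKR_mu_mkM hnet _
  have t2 : dKR (mkM y a) (mkM y b) ≤ R * ∑ i, |a i - b i| :=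
    dKR_mkM_mkM hR y a b haP hbP hsa hsb
  have hsum : ∑ i, |a i - b i| ≤ n * σ := by
    calc ∑ i, |a i - b i| ≤ ∑ _i : Fin n, σ := Finset.sum_le_sum (fun i _ => le_of_lt (hν i))
      _ = n * σ := by simp [mul_comm]
  have t2' : dKR (mkM y a) (mkM y b) ≤ δ / 2 := by
    calc dKR (mkM y a) (mkM y b) ≤ R * ∑ i, |a i - b i| := t2
      _ ≤ R * (n * σ) := by
          apply mul_le_mul_of_nonneg_left hsum hR0
      _ ≤ δ / 2 := by
          have hn' : (0:ℝ) < n := by exact_mod_cast hn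
          have heq : R * ((n:ℝ) * σ) = δ * R / (2 * (R + 1)) := by
            rw [hσ_def]; field_simp
          rw [heq, div_le_div_iff₀ (by positivity) (by norm_num : (0:ℝ) < 2)]
          nlinarith
  calc dKR (ν : Measure X) (μ₀ : Measure X)
      ≤ dKR (ν : Measure X) (mkM y a) + dKR (mkM y a) (μ₀ : Measure X) := dKR_triangle hR _ _ _
    _ ≤ dKR (ν : Measure X) (mkM y a) + (dKR (mkM y a) (mkM y b) + dKR (mkM y b) (μ₀ : Measure X)) := by
        have := dKR_triangle hR (mkM y a) (μ₀ : Measure X) (mkM y b)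
        linarith
    _ ≤ δ/4 + (δ/2 + δ/4) := by
        have := add_le_add t1 (add_le_add t2' t3)
        linarith
    _ = δ := by ring

theorem fin_dKR_net [Nonempty X] {x₀ : X} {R : ℝ} (hR : ∀ z : X, dist z x₀ ≤ R)
    {δ : ℝ} (hδ : 0 < δ) :
    ∃ s : Set (ProbabilityMeasure X), s.Finite ∧
      ∀ μ : ProbabilityMeasure X, ∃ ν ∈ s, dKR (μ : Measure X) (ν : Measure X) ≤ δ := by
  have hR0 : 0 ≤ R := le_trans dist_nonneg (hR x₀)
  obtain ⟨n, y, hn, hnet⟩ := exists_net (X := X) (ε := δ/2) (by linarith)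
  set ε' : ℝ := δ / (2 * (R + 1) * n) with hε'_def
  have hε' : 0 < ε' := by apply div_pos hδ; positivity
  set Δ : Set (Fin n → ℝ) := {a | (∀ i, 0 ≤ a i) ∧ ∑ i, a i = 1} with hΔ_def
  have hΔc : IsCompact Δ := by
    have hpi : IsCompact (Set.pi Set.univ (fun _ : Fin n => Set.Icc (0:ℝ) 1)) :=
      isCompact_univ_pi (fun _ => isCompact_Icc)
    apply IsCompact.of_isClosed_subset hpi
    · have h1 : IsClosed {a : Fin n → ℝ | ∀ i, 0 ≤ a i} := by
        have he : {a : Fin n → ℝ | ∀ i, 0 ≤ a i} = ⋂ i, {a | 0 ≤ a i} := by ext; simp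
        rw [he]
        exact isClosed_iInter (fun i => isClosed_le continuous_const (continuous_apply i))
      have h2 : IsClosed {a : Fin n → ℝ | ∑ i, a i = 1} :=
        isClosed_eq (continuous_finset_sum _ (fun i _ => continuous_apply i)) continuous_const
      exact h1.inter h2
    · rintro a ⟨ha0, hs⟩
      intro i _
      refine ⟨ha0 i, ?_⟩
      calc a i ≤ ∑ j, a j := Finset.single_le_sum (fun j _ => ha0 j) (Finset.mem_univ i)
        _ = 1 := hs
  obtain ⟨t, hts, htf, hcov⟩ := finite_cover_balls_of_compact hΔc hε'
  classical
  set Pmk : (Fin n → ℝ) → ProbabilityMeasure X := fun b =>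
    if h : (∀ i, 0 ≤ b i) ∧ ∑ i, b i = 1 then ⟨mkM y b, mkM_prob y b h.1 h.2⟩
    else ⟨Measure.dirac x₀, Measure.dirac.isProbabilityMeasure⟩ with hPmk_def
  refine ⟨Pmk '' t, htf.image _, ?_⟩
  intro μ
  set a : Fin n → ℝ := fun i => ∫ z, chi (δ/2) y i z ∂(μ : Measure X) with ha_def
  have haP : ∀ i, 0 ≤ a i := integral_chi_nonneg hnet _
  have hsa : ∑ i, a i = 1 := sum_integral_chi hnet _
  have haΔ : a ∈ Δ := ⟨haP, hsa⟩
  have := hcov haΔ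
  simp only [Set.mem_iUnion] at this
  obtain ⟨b, hbt, hball⟩ := this
  have hbΔ : b ∈ Δ := hts hbt
  refine ⟨Pmk b, Set.mem_image_of_mem _ hbt, ?_⟩
  have hPb : (Pmk b : Measure X) = mkM y b := by
    have hPe : Pmk b = ⟨mkM y b, mkM_prob y b hbΔ.1 hbΔ.2⟩ := dif_pos hbΔ
    rw [hPe]
    rfl
  rw [hPb]
  haveI := mkM_prob y a haP hsa
  haveI := mkM_prob y b hbΔ.1 hbΔ.2
  have t1 : dKR (μ : Measure X) (mkM y a) ≤ δ/2 := dKR_mu_mkM hnet _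
  have hsum : ∑ i, |a i - b i| ≤ n * ε' := by
    have hd : dist a b < ε' := by
      simpa [Metric.mem_ball] using hball
    calc ∑ i, |a i - b i| ≤ ∑ _i : Fin n, ε' := by
          apply Finset.sum_le_sum
          intro i _
          calc |a i - b i| = dist (a i) (b i) := (Real.dist_eq _ _).symm
            _ ≤ dist a b := dist_le_pi_dist a b i
            _ ≤ ε' := le_of_lt hd
      _ = n * ε' := by simp [mul_comm]
  have t2 : dKR (mkM y a) (mkM y b) ≤ δ/2 := by
    calc dKR (mkM y a) (mkM y b) ≤ R * ∑ i, |a i - b i| :=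
          dKR_mkM_mkM hR y a b haP hbΔ.1 hsa hbΔ.2
      _ ≤ R * (n * ε') := mul_le_mul_of_nonneg_left hsum hR0
      _ ≤ δ / 2 := by
          have hn' : (0:ℝ) < n := by exact_mod_cast hn
          have heq : R * ((n:ℝ) * ε') = δ * R / (2 * (R + 1)) := by
            rw [hε'_def]; field_simp
          rw [heq, div_le_div_iff₀ (by positivity) (by norm_num : (0:ℝ) < 2)]
          nlinarith
  calc dKR (μ : Measure X) (mkM y b)
      ≤ dKR (μ : Measure X) (mkM y a) + dKR (mkM y a) (mkM y b) := dKR_triangle hR _ _ _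
    _ ≤ δ/2 + δ/2 := add_le_add t1 t2
    _ = δ := by ring

theorem dKR_le_D {x₀ : X} {R : ℝ} (hR : ∀ z : X, dist z x₀ ≤ R)
    (μ ν : Measure X) [IsProbabilityMeasure μ] [IsProbabilityMeasure ν] :
    dKR μ ν ≤ 2 * R := by
  have hR0 : 0 ≤ R := le_trans dist_nonneg (hR x₀)
  exact Real.sSup_le (fun r hr => dKR_mem_le hR μ ν hr) (by linarith)
theorem emp_prob {M : ℕ} (x : Fin (M + 1) → X) : IsProbabilityMeasure (emp x) :=
  (empP x).2

/-- inf-convolution extension of g to probability measures -/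
noncomputable def hFun (g : ∀ M : ℕ, (Fin (M + 1) → X) → ℝ) (rho : ℝ → ℝ) (M : ℕ)
    (μ : ProbabilityMeasure X) : ℝ :=
  ⨅ x : Fin (M + 1) → X, (g M x + rho (dKR (μ : Measure X) (emp x)))

variable [Nonempty X] {x₀ : X} {R : ℝ} (hR : ∀ z : X, dist z x₀ ≤ R)
  {g : ∀ M : ℕ, (Fin (M + 1) → X) → ℝ} {rho : ℝ → ℝ} {Cg : ℝ}
  (hgb : ∀ M x, |g M x| ≤ Cg)
  (hgd : ∀ M (x x' : Fin (M + 1) → X), |g M x - g M x'| ≤ rho (dKR (emp x) (emp x')))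
  (hrho_mono : Monotone rho) (hrho0 : rho 0 = 0) (hrho_nonneg : ∀ t, 0 ≤ rho t)
  (hrho_cont : Continuous rho)

include hgb hrho_nonneg in
theorem hFun_bddBelow (M : ℕ) (μ : ProbabilityMeasure X) :
    BddBelow (Set.range fun x : Fin (M + 1) → X =>
      g M x + rho (dKR (μ : Measure X) (emp x))) := by
  refine ⟨-Cg, ?_⟩
  rintro r ⟨x, rfl⟩
  dsimp only
  have h1 := hgb M x
  have h2 := hrho_nonneg (dKR (μ : Measure X) (emp x))
  have := neg_abs_le (g M x)
  linarith

include hgb hrho_nonneg in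
theorem hFun_le (M : ℕ) (μ : ProbabilityMeasure X) (x : Fin (M + 1) → X) :
    hFun g rho M μ ≤ g M x + rho (dKR (μ : Measure X) (emp x)) :=
  ciInf_le (hFun_bddBelow hgb hrho_nonneg M μ) x

theorem le_hFun {M : ℕ} {μ : ProbabilityMeasure X} {c : ℝ}
    (h : ∀ x : Fin (M + 1) → X, c ≤ g M x + rho (dKR (μ : Measure X) (emp x))) :
    c ≤ hFun g rho M μ :=
  le_ciInf h

include hgb hgd hrho_mono hrho0 hrho_nonneg in
theorem hFun_emp (M : ℕ) (x : Fin (M + 1) → X) : hFun g rho M (empP x) = g M x := by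
  apply le_antisymm
  · have := hFun_le hgb hrho_nonneg M (empP x) x
    have hc : (empP x : Measure X) = emp x := rfl
    rw [hc, dKR_self, hrho0, add_zero] at this
    exact this
  · apply le_hFun
    intro x'
    have h1 := hgd M x x'
    have hc : (empP x : Measure X) = emp x := rfl
    rw [hc]
    linarith [h1, le_abs_self (g M x - g M x')]

include hR hgb hrho_mono hrho_nonneg in
theorem hFun_bound (M : ℕ) (μ : ProbabilityMeasure X) :
    |hFun g rho M μ| ≤ Cg + rho (2 * R) := by
  have hCg : 0 ≤ Cg := le_trans (abs_nonneg _) (hgb M (fun _ => Classical.arbitrary X))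
  rw [abs_le]
  constructor
  · have : -Cg ≤ hFun g rho M μ := by
      apply le_hFun
      intro x
      have h1 := hgb M x
      have h2 := hrho_nonneg (dKR (μ : Measure X) (emp x))
      have := neg_abs_le (g M x)
      linarith
    have := hrho_nonneg (2 * R)
    linarith
  · set x : Fin (M + 1) → X := fun _ => Classical.arbitrary X with hx
    haveI := emp_prob x
    have h1 := hFun_le hgb hrho_nonneg M μ x
    have h2 : dKR (μ : Measure X) (emp x) ≤ 2 * R := dKR_le_D hR _ _
    have h3 := hrho_mono h2
    have h4 := hgb M x
    have := le_abs_self (g M x)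
    linarith

include hR hgb hrho_mono hrho_nonneg hrho_cont in
theorem hFun_equicont {ε : ℝ} (hε : 0 < ε) :
    ∃ δ > 0, ∀ (M : ℕ) (μ ν : ProbabilityMeasure X),
      dKR (μ : Measure X) (ν : Measure X) ≤ δ →
      |hFun g rho M μ - hFun g rho M ν| ≤ ε := by
  have hR0 : 0 ≤ R := le_trans dist_nonneg (hR x₀)
  -- uniform continuity of rho on [-1, 2R+1]
  have hucont : UniformContinuousOn rho (Set.Icc (-1) (2 * R + 1)) :=
    (isCompact_Icc).uniformContinuousOn_of_continuous hrho_cont.continuousOn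
  rw [Metric.uniformContinuousOn_iff] at hucont
  obtain ⟨δ, hδ, hδ'⟩ := hucont ε hε
  set δ' : ℝ := min δ 1 with hδ'_def
  refine ⟨δ' / 2, by positivity, ?_⟩
  intro M μ ν hμν
  have key : ∀ (α β : ProbabilityMeasure X),
      dKR (α : Measure X) (β : Measure X) ≤ δ' / 2 →
      hFun g rho M α ≤ hFun g rho M β + ε := by
    intro α β hαβ
    have : hFun g rho M α - ε ≤ hFun g rho M β := by
      apply le_hFun
      intro x
      haveI := emp_prob x
      have h1 := hFun_le hgb hrho_nonneg M α x
      have hd1 : dKR (α : Measure X) (emp x) ≤ dKR (α : Measure X) (β : Measure X)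
          + dKR (β : Measure X) (emp x) := dKR_triangle hR _ _ _
      have hin1 : dKR (α : Measure X) (emp x) ∈ Set.Icc (-1 : ℝ) (2 * R + 1) :=
        ⟨by linarith [dKR_nonneg hR (α : Measure X) (emp x)],
          by linarith [dKR_le_D hR (α : Measure X) (emp x)]⟩
      have hin2 : dKR (β : Measure X) (emp x) ∈ Set.Icc (-1 : ℝ) (2 * R + 1) :=
        ⟨by linarith [dKR_nonneg hR (β : Measure X) (emp x)],
          by linarith [dKR_le_D hR (β : Measure X) (emp x)]⟩
      have hd2 : dKR (β : Measure X) (emp x) ≤ dKR (β : Measure X) (α : Measure X)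
          + dKR (α : Measure X) (emp x) := dKR_triangle hR _ _ _
      have hsymm : dKR (β : Measure X) (α : Measure X) = dKR (α : Measure X) (β : Measure X) :=
        dKR_symm _ _
      have hδδ : δ' ≤ δ := min_le_left _ _
      have hdist : dist (dKR (α : Measure X) (emp x)) (dKR (β : Measure X) (emp x)) < δ := by
        rw [Real.dist_eq, abs_lt]
        constructor <;> [linarith [hd1, hαβ, hsymm]; linarith [hd2, hαβ, hsymm]]
      have hrr := hδ' _ hin1 _ hin2 hdist
      rw [Real.dist_eq, abs_lt] at hrr
      linarith [h1, hrr.1, hrr.2]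
    linarith
  have h1 := key μ ν hμν
  have h2 := key ν μ (by rwa [dKR_symm])
  rw [abs_le]
  constructor <;> linarith


include hR hgb hrho_mono hrho_nonneg hrho_cont in
theorem hFun_continuousAt (M : ℕ) (μ₀ : ProbabilityMeasure X) :
    ContinuousAt (hFun g rho M) μ₀ := by
  rw [ContinuousAt, Metric.tendsto_nhds]
  intro ε hε
  obtain ⟨δ, hδ, hkey⟩ := hFun_equicont hR hgb hrho_mono hrho_nonneg hrho_cont
    (show (0:ℝ) < ε/2 by linarith)
  filter_upwards [weak_nbhd_dKR hR μ₀ hδ] with ν hν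
  have := hkey M ν μ₀ hν
  rw [Real.dist_eq]
  linarith [abs_nonneg (hFun g rho M ν - hFun g rho M μ₀)]

end Infrastructure

theorem mean_field_limit_of_bounded_rkhs_sequences
    {X : Type*} [MetricSpace X] [CompactSpace X] [MeasurableSpace X] [BorelSpace X]
    (H : ℕ → Type*) [∀ M, NormedAddCommGroup (H M)] [∀ M, InnerProductSpace ℝ (H M)]
    (k : ∀ M : ℕ, (Fin (M + 1) → X) → (Fin (M + 1) → X) → ℝ)
    (K : ∀ M : ℕ, (Fin (M + 1) → X) → H M)
    (hrepr : ∀ (M : ℕ) (x x' : Fin (M + 1) → X), k M x x' = (inner ℝ (K M x') (K M x) : ℝ))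
    (hperm : ∀ (M : ℕ) (σ : Equiv.Perm (Fin (M + 1))) (x x' : Fin (M + 1) → X),
      k M (x ∘ σ) x' = k M x x')
    (Ck : ℝ) (hbdd : ∀ (M : ℕ) (x x' : Fin (M + 1) → X), |k M x x'| ≤ Ck)
    (ω : ℝ → ℝ) (hcont : Continuous ω) (hmono : Monotone ω) (hzero : ω 0 = 0)
    (hucont : ∀ (M : ℕ) (x₁ x₂ x₁' x₂' : Fin (M + 1) → X),
      |k M x₁ x₁' - k M x₂ x₂'| ≤ ω (dKR (emp x₁) (emp x₂) + dKR (emp x₁') (emp x₂')))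
    (f : ∀ M, H M) (B : ℝ) (hB : ∀ M, ‖f M‖ ≤ B) :
    ∃ φ : ℕ → ℕ, StrictMono φ ∧
      ∃ F : ProbabilityMeasure X → ℝ, Continuous F ∧
        Filter.Tendsto (fun ℓ => ⨆ x : Fin (φ ℓ + 1) → X,
          |(inner ℝ (f (φ ℓ)) (K (φ ℓ) x) : ℝ) - F (empP x)|) Filter.atTop (nhds 0) := by
  rcases isEmpty_or_nonempty X with hX | hX
  · -- degenerate case: X is empty
    refine ⟨id, strictMono_id, fun _ => 0, continuous_const, ?_⟩
    have : ∀ ℓ : ℕ, (⨆ x : Fin (id ℓ + 1) → X,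
        |(inner ℝ (f (id ℓ)) (K (id ℓ) x) : ℝ) - (fun _ => (0:ℝ)) (empP x)|) = 0 := by
      intro ℓ
      haveI : IsEmpty (Fin (id ℓ + 1) → X) := ⟨fun x => (IsEmpty.false (x 0))⟩
      exact Real.iSup_of_isEmpty _
    simp only [this]
    exact tendsto_const_nhds
  -- main case
  have x₀ : X := Classical.arbitrary X
  obtain ⟨R, hRsub⟩ := (isCompact_univ (X := X)).isBounded.subset_closedBall x₀
  have hR : ∀ z : X, dist z x₀ ≤ R := fun z => by
    have := hRsub (Set.mem_univ z); rwa [Metric.mem_closedBall] at this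
  have hR0 : 0 ≤ R := le_trans dist_nonneg (hR x₀)
  have B0 : 0 ≤ B := le_trans (norm_nonneg _) (hB 0)
  set g : ∀ M : ℕ, (Fin (M + 1) → X) → ℝ := fun M x => (inner ℝ (f M) (K M x) : ℝ) with hg_def
  set rho : ℝ → ℝ := fun t => B * Real.sqrt (2 * ω t) with hrho_def
  have hrho_mono : Monotone rho := fun s t hst =>
    mul_le_mul_of_nonneg_left (Real.sqrt_le_sqrt (by linarith [hmono hst])) B0
  have hrho0 : rho 0 = 0 := by simp [hrho_def, hzero]
  have hrho_nonneg : ∀ t, 0 ≤ rho t := fun t => mul_nonneg B0 (Real.sqrt_nonneg _)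
  have hrho_cont : Continuous rho :=
    continuous_const.mul (Real.continuous_sqrt.comp (continuous_const.mul hcont))
  set Cg : ℝ := B * Real.sqrt Ck with hCg_def
  -- norm of K in terms of k
  have hnormK : ∀ M (x : Fin (M + 1) → X), ‖K M x‖ ^ 2 = k M x x := by
    intro M x
    rw [hrepr M x x]
    exact (real_inner_self_eq_norm_sq _).symm
  have hgb : ∀ M (x : Fin (M + 1) → X), |g M x| ≤ Cg := by
    intro M x
    have h1 : |g M x| ≤ ‖f M‖ * ‖K M x‖ := abs_real_inner_le_norm _ _
    have h2 : ‖K M x‖ ≤ Real.sqrt Ck := by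
      have := hnormK M x
      have hk : k M x x ≤ Ck := le_of_abs_le (hbdd M x x)
      calc ‖K M x‖ = Real.sqrt (‖K M x‖ ^ 2) := (Real.sqrt_sq (norm_nonneg _)).symm
        _ ≤ Real.sqrt Ck := Real.sqrt_le_sqrt (by rw [this]; exact hk)
    calc |g M x| ≤ ‖f M‖ * ‖K M x‖ := h1
      _ ≤ B * Real.sqrt Ck := mul_le_mul (hB M) h2 (norm_nonneg _) B0
  have hgd : ∀ M (x x' : Fin (M + 1) → X),
      |g M x - g M x'| ≤ rho (dKR (emp x) (emp x')) := by
    intro M x x'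
    set d : ℝ := dKR (emp x) (emp x') with hd_def
    have hKd : ‖K M x - K M x'‖ ^ 2 ≤ 2 * ω d := by
      have e1 : ‖K M x - K M x'‖ ^ 2 = k M x x - 2 * k M x' x + k M x' x' := by
        rw [norm_sub_sq_real]
        have ha := hnormK M x
        have hb := hnormK M x'
        have hab : (inner ℝ (K M x) (K M x') : ℝ) = k M x' x := (hrepr M x' x).symm
        rw [ha, hb, hab]
      have t1 : k M x x - k M x' x ≤ ω d := by
        have := le_trans (le_abs_self _) (hucont M x x' x x)
        rwa [dKR_self, add_zero] at this
      have t2 : k M x' x' - k M x' x ≤ ω d := by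
        have := le_trans (le_abs_self _) (hucont M x' x' x' x)
        rwa [dKR_self, zero_add, dKR_symm, ← hd_def] at this
      linarith
    have h2 : ‖K M x - K M x'‖ ≤ Real.sqrt (2 * ω d) := by
      calc ‖K M x - K M x'‖ = Real.sqrt (‖K M x - K M x'‖ ^ 2) :=
            (Real.sqrt_sq (norm_nonneg _)).symm
        _ ≤ Real.sqrt (2 * ω d) := Real.sqrt_le_sqrt hKd
    have h1 : g M x - g M x' = (inner ℝ (f M) (K M x - K M x') : ℝ) := by
      rw [hg_def]; simp [inner_sub_right]
    rw [h1]
    calc |(inner ℝ (f M) (K M x - K M x') : ℝ)| ≤ ‖f M‖ * ‖K M x - K M x'‖ :=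
          abs_real_inner_le_norm _ _
      _ ≤ B * Real.sqrt (2 * ω d) := mul_le_mul (hB M) h2 (norm_nonneg _) B0
  -- countable family of finite nets in the space of probability measures
  have hnets : ∀ j : ℕ, ∃ s : Set (ProbabilityMeasure X), s.Finite ∧
      ∀ μ : ProbabilityMeasure X, ∃ ν ∈ s,
        dKR (μ : Measure X) (ν : Measure X) ≤ 1 / (j + 1) := by
    intro j
    exact fin_dKR_net hR (by positivity)
  choose s hsfin hsnet using hnets
  have hPne : Nonempty (ProbabilityMeasure X) :=
    ⟨⟨Measure.dirac x₀, Measure.dirac.isProbabilityMeasure⟩⟩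
  set T : Set (ProbabilityMeasure X) := ⋃ j, s j with hT_def
  have hTc : T.Countable := Set.countable_iUnion (fun j => (hsfin j).countable)
  have hTne : T.Nonempty := by
    obtain ⟨ν, hν, -⟩ := hsnet 0 (Classical.arbitrary _)
    exact ⟨ν, Set.mem_iUnion.2 ⟨0, hν⟩⟩
  obtain ⟨e, hTe⟩ := hTc.exists_eq_range hTne
  set C' : ℝ := Cg + rho (2 * R) with hC'_def
  set v : ℕ → ℕ → ℝ := fun M j => hFun g rho M (e j) with hv_def
  have hvK : ∀ M, v M ∈ Set.pi Set.univ (fun _ : ℕ => Set.Icc (-C') C') := by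
    intro M j _
    have := hFun_bound hR hgb hrho_mono hrho_nonneg M (e j)
    rw [abs_le] at this
    exact ⟨this.1, this.2⟩
  have hKco : IsCompact (Set.pi Set.univ (fun _ : ℕ => Set.Icc (-C' : ℝ) C')) :=
    isCompact_univ_pi (fun _ => isCompact_Icc)
  obtain ⟨u, hu, φ, hφ, hconv⟩ := hKco.tendsto_subseq hvK
  have hpt : ∀ j : ℕ, Filter.Tendsto (fun ℓ => hFun g rho (φ ℓ) (e j))
      Filter.atTop (nhds (u j)) := by
    intro j
    have := tendsto_pi_nhds.1 hconv j
    exact this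
  -- uniform Cauchy property
  have hUC : ∀ ε : ℝ, 0 < ε → ∃ N : ℕ, ∀ a ≥ N, ∀ b ≥ N, ∀ μ : ProbabilityMeasure X,
      |hFun g rho (φ a) μ - hFun g rho (φ b) μ| ≤ ε := by
    intro ε hε
    obtain ⟨δ, hδ, hδε⟩ := hFun_equicont hR hgb hrho_mono hrho_nonneg hrho_cont
      (show (0:ℝ) < ε/3 by linarith)
    obtain ⟨j0, hj0⟩ := exists_nat_one_div_lt hδ
    have hfin : ∀ᶠ p : ℕ × ℕ in Filter.atTop, ∀ ν ∈ s j0,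
        |hFun g rho (φ p.1) ν - hFun g rho (φ p.2) ν| ≤ ε/3 := by
      rw [Filter.eventually_all_finite (hsfin j0)]
      intro ν hν
      have hνT : ν ∈ T := Set.mem_iUnion.2 ⟨j0, hν⟩
      rw [hTe] at hνT
      obtain ⟨m, rfl⟩ := hνT
      obtain ⟨N, hN⟩ := Metric.tendsto_atTop.1 (hpt m) (ε/6) (by linarith)
      rw [Filter.eventually_atTop]
      refine ⟨(N, N), fun p hp => ?_⟩
      have h1 := hN p.1 hp.1
      have h2 := hN p.2 hp.2
      rw [Real.dist_eq] at h1 h2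
      rw [abs_sub_comm] at h2
      calc |hFun g rho (φ p.1) (e m) - hFun g rho (φ p.2) (e m)|
          ≤ |hFun g rho (φ p.1) (e m) - u m| + |u m - hFun g rho (φ p.2) (e m)| :=
            abs_sub_le _ _ _
        _ ≤ ε/6 + ε/6 := add_le_add (le_of_lt h1) (le_of_lt h2)
        _ ≤ ε/3 := by linarith
    obtain ⟨⟨N₁, N₂⟩, hN⟩ := Filter.eventually_atTop.1 hfin
    refine ⟨max N₁ N₂, fun a ha b hb μ => ?_⟩
    obtain ⟨ν, hν, hdν⟩ := hsnet j0 μ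
    have hdν' : dKR (μ : Measure X) (ν : Measure X) ≤ δ := le_trans hdν (le_of_lt hj0)
    have hνab := hN (a, b) ⟨le_trans (le_max_left _ _) ha, le_trans (le_max_right _ _) hb⟩ ν hν
    have e1 := hδε (φ a) μ ν hdν'
    have e2 := hδε (φ b) μ ν hdν'
    rw [abs_sub_comm] at e2
    have t1 := abs_sub_le (hFun g rho (φ a) μ) (hFun g rho (φ a) ν) (hFun g rho (φ b) μ)
    have t2 := abs_sub_le (hFun g rho (φ a) ν) (hFun g rho (φ b) ν) (hFun g rho (φ b) μ)
    linarith
  -- pointwise limit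
  have hCau : ∀ μ : ProbabilityMeasure X, CauchySeq (fun ℓ => hFun g rho (φ ℓ) μ) := by
    intro μ
    rw [Metric.cauchySeq_iff]
    intro ε hε
    obtain ⟨N, hN⟩ := hUC (ε/2) (by linarith)
    refine ⟨N, fun a ha b hb => ?_⟩
    rw [Real.dist_eq]
    have := hN a ha b hb μ
    linarith
  have hFex : ∀ μ : ProbabilityMeasure X, ∃ L : ℝ,
      Filter.Tendsto (fun ℓ => hFun g rho (φ ℓ) μ) Filter.atTop (nhds L) :=
    fun μ => cauchySeq_tendsto_of_complete (hCau μ)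
  choose F hF using hFex
  -- uniform convergence
  have hunif : ∀ ε : ℝ, 0 < ε → ∃ N : ℕ, ∀ ℓ ≥ N, ∀ μ : ProbabilityMeasure X,
      |hFun g rho (φ ℓ) μ - F μ| ≤ ε := by
    intro ε hε
    obtain ⟨N, hN⟩ := hUC (ε/2) (by linarith)
    refine ⟨N, fun ℓ hℓ μ => ?_⟩
    have hlim : Filter.Tendsto (fun b => |hFun g rho (φ ℓ) μ - hFun g rho (φ b) μ|)
        Filter.atTop (nhds |hFun g rho (φ ℓ) μ - F μ|) :=
      (tendsto_const_nhds.sub (hF μ)).abs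
    have hub : ∀ᶠ b in Filter.atTop,
        |hFun g rho (φ ℓ) μ - hFun g rho (φ b) μ| ≤ ε/2 := by
      filter_upwards [Filter.eventually_ge_atTop N] with b hb
      exact hN ℓ hℓ b hb μ
    have := le_of_tendsto hlim hub
    linarith
  -- continuity of the limit
  have hFcont : Continuous F := by
    rw [continuous_iff_continuousAt]
    intro μ₀
    rw [ContinuousAt, Metric.tendsto_nhds]
    intro ε hε
    obtain ⟨N, hN⟩ := hunif (ε/4) (by linarith)
    have hc := hFun_continuousAt hR hgb hrho_mono hrho_nonneg hrho_cont (φ N) μ₀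
    rw [ContinuousAt, Metric.tendsto_nhds] at hc
    filter_upwards [hc (ε/4) (by linarith)] with ν hν
    rw [Real.dist_eq] at hν ⊢
    have h1 := hN N le_rfl ν
    have h2 := hN N le_rfl μ₀
    have t1 := abs_sub_le (F ν) (hFun g rho (φ N) ν) (F μ₀)
    have t2 := abs_sub_le (hFun g rho (φ N) ν) (hFun g rho (φ N) μ₀) (F μ₀)
    rw [abs_sub_comm (F ν) (hFun g rho (φ N) ν)] at t1
    linarith
  refine ⟨φ, hφ, F, hFcont, ?_⟩
  rw [Metric.tendsto_atTop]
  intro ε hε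
  obtain ⟨N, hN⟩ := hunif (ε/2) (by linarith)
  refine ⟨N, fun ℓ hℓ => ?_⟩
  set S : ℝ := ⨆ x : Fin (φ ℓ + 1) → X, |g (φ ℓ) x - F (empP x)| with hS_def
  have hS_nonneg : 0 ≤ S := Real.iSup_nonneg (fun x => abs_nonneg _)
  have hS_le : S ≤ ε/2 := by
    apply Real.iSup_le _ (by linarith)
    intro x
    have hemp := hFun_emp hgb hgd hrho_mono hrho0 hrho_nonneg (φ ℓ) x
    rw [← hemp]
    exact hN ℓ hℓ (empP x)
  rw [Real.dist_eq, sub_zero, abs_of_nonneg hS_nonneg]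
  exact lt_of_le_of_lt hS_le (by linarith)
end

section
/- Uniform continuity of double-sum kernels w.r.t. the KME distance: if k₀ is a kernel on X bounded by C, then for all M and x₁, x₁′, x₂, x₂′ ∈ X^M, |k^{[M]}(x₁,x₁′) − k^{[M]}(x₂,x₂′)| ≤ √C · ( ‖f_{μ̂[x₁]} − f_{μ̂[x₂]}‖_{H₀} + ‖f_{μ̂[x₁′]} − f_{μ̂[x₂′]}‖_{H₀} ), where k^{[M]} is the double-sum kernel and f_μ the kernel mean embedding. -/
/-- The double-sum kernel on `X^M` built from a base kernel `k₀` on `X`. -/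
noncomputable def doubleSum {X : Type*} (k₀ : X → X → ℝ) (M : ℕ)
    (x x' : Fin M → X) : ℝ :=
  (1 / (M : ℝ) ^ 2) * ∑ m, ∑ m', k₀ (x m) (x' m')

theorem double_sum_kernel_uniform_continuity_kme
    {X : Type*} {H : Type*} [NormedAddCommGroup H] [InnerProductSpace ℝ H]
    (k₀ : X → X → ℝ) (Φ : X → H) (C : ℝ)
    (hfeat : ∀ x x' : X, k₀ x x' = (inner ℝ (Φ x') (Φ x) : ℝ))
    (hbdd : ∀ x x', |k₀ x x'| ≤ C) :
    ∀ (M : ℕ) (x₁ x₁' x₂ x₂' : Fin M → X),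
      |doubleSum k₀ M x₁ x₁' - doubleSum k₀ M x₂ x₂'| ≤
        Real.sqrt C *
          (‖(M : ℝ)⁻¹ • ∑ m, Φ (x₁ m) - (M : ℝ)⁻¹ • ∑ m, Φ (x₂ m)‖ +
           ‖(M : ℝ)⁻¹ • ∑ m, Φ (x₁' m) - (M : ℝ)⁻¹ • ∑ m, Φ (x₂' m)‖) := by
  intro M x₁ x₁' x₂ x₂'
  by_cases hM : M = 0
  · subst hM
    simp [doubleSum]
  have hMpos : (0:ℝ) < (M:ℝ) := by positivity
  -- key identity
  have key : ∀ x x' : Fin M → X, doubleSum k₀ M x x' =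
      (inner ℝ ((M:ℝ)⁻¹ • ∑ m, Φ (x' m)) ((M:ℝ)⁻¹ • ∑ m, Φ (x m)) : ℝ) := by
    intro x x'
    rw [real_inner_smul_left, real_inner_smul_right, sum_inner, doubleSum]
    have : ∀ m' : Fin M, (inner ℝ (Φ (x' m')) (∑ m, Φ (x m)) : ℝ)
        = ∑ m, k₀ (x m) (x' m') := by
      intro m'
      rw [inner_sum]
      exact Finset.sum_congr rfl fun m _ => (hfeat (x m) (x' m')).symm
    simp_rw [this]
    rw [Finset.sum_comm]
    ring
  -- norm bound
  have hnorm : ∀ x : Fin M → X, ‖(M:ℝ)⁻¹ • ∑ m, Φ (x m)‖ ≤ Real.sqrt C := by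
    intro x
    have h1 : ‖(M:ℝ)⁻¹ • ∑ m, Φ (x m)‖ ^ 2
        = (inner ℝ ((M:ℝ)⁻¹ • ∑ m, Φ (x m)) ((M:ℝ)⁻¹ • ∑ m, Φ (x m)) : ℝ) :=
      (real_inner_self_eq_norm_sq _).symm
    have h2 : doubleSum k₀ M x x ≤ C := by
      have hsum : ∑ m : Fin M, ∑ m' : Fin M, k₀ (x m) (x m') ≤
          ∑ m : Fin M, ∑ m' : Fin M, C := by
        apply Finset.sum_le_sum
        intro m _
        apply Finset.sum_le_sum
        intro m' _
        exact le_trans (le_abs_self _) (hbdd _ _)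
      calc doubleSum k₀ M x x ≤ (1 / (M:ℝ)^2) * ∑ m : Fin M, ∑ m' : Fin M, C := by
            unfold doubleSum
            apply mul_le_mul_of_nonneg_left hsum
            positivity
        _ = C := by
            simp only [Finset.sum_const, Finset.card_univ, Fintype.card_fin, nsmul_eq_mul]
            field_simp
    have h3 : ‖(M:ℝ)⁻¹ • ∑ m, Φ (x m)‖ ^ 2 ≤ C := by
      rw [h1, ← key x x]; exact h2
    calc ‖(M:ℝ)⁻¹ • ∑ m, Φ (x m)‖
        = Real.sqrt (‖(M:ℝ)⁻¹ • ∑ m, Φ (x m)‖ ^ 2) := by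
          rw [Real.sqrt_sq (norm_nonneg _)]
      _ ≤ Real.sqrt C := Real.sqrt_le_sqrt h3
  set f₁ := (M:ℝ)⁻¹ • ∑ m, Φ (x₁ m)
  set f₁' := (M:ℝ)⁻¹ • ∑ m, Φ (x₁' m)
  set f₂ := (M:ℝ)⁻¹ • ∑ m, Φ (x₂ m)
  set f₂' := (M:ℝ)⁻¹ • ∑ m, Φ (x₂' m)
  rw [key x₁ x₁', key x₂ x₂']
  have hdiff : (inner ℝ f₁' f₁ : ℝ) - inner ℝ f₂' f₂
      = inner ℝ f₁' (f₁ - f₂) + inner ℝ (f₁' - f₂') f₂ := by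
    rw [inner_sub_right, inner_sub_left]; ring
  rw [hdiff]
  calc |(inner ℝ f₁' (f₁ - f₂) : ℝ) + inner ℝ (f₁' - f₂') f₂|
      ≤ |(inner ℝ f₁' (f₁ - f₂) : ℝ)| + |(inner ℝ (f₁' - f₂') f₂ : ℝ)| := abs_add_le _ _
    _ ≤ ‖f₁'‖ * ‖f₁ - f₂‖ + ‖f₁' - f₂'‖ * ‖f₂‖ := by
        gcongr <;> exact abs_real_inner_le_norm _ _
    _ ≤ Real.sqrt C * ‖f₁ - f₂‖ + ‖f₁' - f₂'‖ * Real.sqrt C := by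
        gcongr
        · exact hnorm x₁'
        · exact hnorm x₂
    _ = Real.sqrt C * (‖f₁ - f₂‖ + ‖f₁' - f₂'‖) := by ring
end
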